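/- arXiv:math/0405543 — 2 statements merged into one kernel-verified Lean document; each statement's English description precedes it below -/
import Mathlib

section
/- Define the generalized exponential e_δ(t) = Σ_{j≥0} b_j t^{q^j} by b_0 = 1 and b_{j+1} = b_j^q/(D_{j+1}S_{j+1}), where S_n = Σ_{l=1}^{n} σ_l/D_{n-l}^{q^l}. If |σ_1| = 1 and |σ_l| ≤ 1 for all l ≥ 2, then |D_nS_n| = q^{-1} for all n ≥ 1 and |b_j| = q^{(q^j-1)/(q-1)} for all j ≥ 0. -/
noncomputable section
open scoped Classical

/-- `[i] = x^{q^i} - x`. -/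
def brk {K : Type*} [CommRing K] (q : ℕ) (x : K) (i : ℕ) : K := x ^ q ^ i - x

/-- Carlitz factorial: `D_0 = 1`, `D_i = [i] D_{i-1}^q`. -/
def Dfac {K : Type*} [CommRing K] (q : ℕ) (x : K) : ℕ → K
  | 0 => 1
  | i + 1 => brk q x (i + 1) * (Dfac q x i) ^ q

/-- The local parameter `x ∈ K = F_q((x))`. -/
def xK (F : Type*) [Field F] : LaurentSeries F := HahnSeries.single (1 : ℤ) 1

/-- The absolute value on `K = F_q((x))`: `|z| = q^{-m}` where `m` is the order. -/
def absK (q : ℕ) {F : Type*} [Field F] (z : LaurentSeries F) : ℝ :=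
  if z = 0 then 0 else (q : ℝ) ^ (-z.order)

/-- `S_n = Σ_{l=1}^{n} σ_l / D_{n-l}^{q^l}`, for coefficients `σ_l ∈ K̄_c` of a delta operator
`δ₀ = Σ σ_l Δ^{(l)}`. -/
def Sseq {F L : Type*} [Field F] [Field L] [Algebra (LaurentSeries F) L]
    (q : ℕ) (σ : ℕ → L) (n : ℕ) : L :=
  ∑ l ∈ Finset.Icc 1 n,
    σ l / algebraMap (LaurentSeries F) L ((Dfac q (xK F) (n - l)) ^ q ^ l)

lemma xK_pow {F : Type*} [Field F] (k : ℕ) : (xK F) ^ k = HahnSeries.single (k : ℤ) (1 : F) := by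
  rw [xK, HahnSeries.single_pow]; simp

lemma single_sub_facts {F : Type*} [Field F] (k : ℤ) (hk : 1 < k) :
    (HahnSeries.single k (1:F) - HahnSeries.single 1 1) ≠ 0 ∧
    (HahnSeries.single k (1:F) - HahnSeries.single 1 1).order = 1 := by
  have hneg : -(HahnSeries.single (1:ℤ) (1:F)) = HahnSeries.single 1 (-1) := by
    ext g; simp only [HahnSeries.coeff_neg, HahnSeries.coeff_single]
    split <;> simp
  have h1 : (HahnSeries.single (1:ℤ) (-1:F)).orderTop = (1:ℤ) :=
    HahnSeries.orderTop_single (by norm_num)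
  have h2 : (HahnSeries.single k (1:F)).orderTop = (k:ℤ) :=
    HahnSeries.orderTop_single one_ne_zero
  have hlt : (HahnSeries.single (1:ℤ) (-1:F)).orderTop < (HahnSeries.single k (1:F)).orderTop := by
    rw [h1, h2]; exact_mod_cast hk
  have heq : HahnSeries.single k (1:F) - HahnSeries.single 1 1
      = HahnSeries.single (1:ℤ) (-1:F) + HahnSeries.single k (1:F) := by
    rw [sub_eq_neg_add, hneg]
  have hz : (HahnSeries.single k (1:F) - HahnSeries.single 1 1).orderTop
      = ((1:ℤ) : WithTop ℤ) := by
    rw [heq, HahnSeries.orderTop_add_eq_left hlt, h1]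
  have hne : (HahnSeries.single k (1:F) - HahnSeries.single 1 1) ≠ 0 := by
    rw [← HahnSeries.orderTop_ne_top, hz]; exact WithTop.coe_ne_top
  refine ⟨hne, ?_⟩
  have := HahnSeries.order_eq_orderTop_of_ne_zero hne
  rw [hz] at this
  exact_mod_cast this

lemma absK_brk {F : Type*} [Field F] (q i : ℕ) (hq : 2 ≤ q) (hi : 1 ≤ i) :
    absK q (brk q (xK F) i) = (q : ℝ) ^ (-1 : ℤ) := by
  have hk : 1 < ((q ^ i : ℕ) : ℤ) := by
    have : 2 ≤ q ^ i := le_trans hq (Nat.le_self_pow (by omega) q)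
    exact_mod_cast this
  have heq : brk q (xK F) i
      = HahnSeries.single ((q ^ i : ℕ) : ℤ) (1:F) - HahnSeries.single 1 1 := by
    rw [brk, xK_pow (F := F) (q ^ i), xK]
  obtain ⟨hne, hord⟩ := single_sub_facts (F := F) ((q^i : ℕ) : ℤ) hk
  rw [heq, absK, if_neg hne, hord]

/-- If `|σ_1| = 1` and `|σ_l| ≤ 1` for `l ≥ 2`, then `|D_n S_n| = q^{-1}` for all `n ≥ 1`,
and the coefficients of the generalized exponential `e_δ(t) = Σ b_j t^{q^j}` (`b_0 = 1`,
`b_{j+1} = b_j^q/(D_{j+1}S_{j+1})`) satisfy `|b_j| = q^{(q^j-1)/(q-1)}` for all `j ≥ 0`.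
Here `L` is a nonarchimedean valued extension of `K = F_q((x))` (such as `K̄_c`). -/
theorem generalized_exponential_abs {F L : Type*} [Field F] [Fintype F] [Field L]
    [Algebra (LaurentSeries F) L]
    (q : ℕ) (hq : q = Fintype.card F)
    (abv : AbsoluteValue L ℝ)
    (hna : ∀ a b : L, abv (a + b) ≤ max (abv a) (abv b))
    (hext : ∀ z : LaurentSeries F, abv (algebraMap (LaurentSeries F) L z) = absK q z)
    (σ : ℕ → L) (hσ1 : abv (σ 1) = 1) (hσ : ∀ l, 2 ≤ l → abv (σ l) ≤ 1)
    (b : ℕ → L) (hb0 : b 0 = 1)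
    (hb : ∀ j : ℕ,
      b (j + 1)
        = (b j) ^ q
            / (algebraMap (LaurentSeries F) L (Dfac q (xK F) (j + 1)) * Sseq (F := F) q σ (j + 1))) :
    (∀ n, 1 ≤ n →
        abv (algebraMap (LaurentSeries F) L (Dfac q (xK F) n) * Sseq (F := F) q σ n) = (q : ℝ)⁻¹)
    ∧ ∀ j : ℕ, abv (b j) = (q : ℝ) ^ (((q : ℝ) ^ j - 1) / ((q : ℝ) - 1)) := by
  have hq2 : 2 ≤ q := by rw [hq]; exact Fintype.one_lt_card
  have hq0 : (0:ℝ) < q := by positivity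
  have hq0' : (q:ℝ) ≠ 0 := ne_of_gt hq0
  have hq1 : (1:ℝ) < q := by exact_mod_cast hq2
  set d : ℕ → ℕ := fun n => ∑ i ∈ Finset.range n, q ^ i with hd
  have hdsucc : ∀ n, d (n+1) = q * d n + 1 := fun n => geom_sum_succ
  -- |D_n|
  have hD : ∀ n, abv (algebraMap (LaurentSeries F) L (Dfac q (xK F) n))
      = (q:ℝ) ^ (-(d n : ℤ)) := by
    intro n
    induction n with
    | zero => simp [Dfac, hd]
    | succ n ih =>
      have : Dfac q (xK F) (n+1) = brk q (xK F) (n+1) * (Dfac q (xK F) n) ^ q := rfl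
      rw [this, map_mul, map_pow, abv.map_mul, abv.map_pow, hext,
        absK_brk q (n+1) hq2 (by omega), ih, ← zpow_natCast ((q:ℝ) ^ (-(d n : ℤ))) q,
        ← zpow_mul, ← zpow_add₀ hq0']
      congr 1
      have := hdsucc n
      push_cast [this]
      ring
  -- nonarchimedean helpers
  have habv_sum_lt : ∀ (s : Finset ℕ) (f : ℕ → L) (C : ℝ), 0 < C →
      (∀ i ∈ s, abv (f i) < C) → abv (∑ i ∈ s, f i) < C := by
    intro s f C hC
    induction s using Finset.cons_induction with
    | empty => intro _; simpa using hC
    | cons a s ha ih =>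
      intro h
      rw [Finset.sum_cons]
      exact lt_of_le_of_lt (hna _ _)
        (max_lt (h a (Finset.mem_cons_self a s)) (ih fun i hi => h i (Finset.mem_cons_of_mem hi)))
  have habv_add_eq : ∀ a s : L, abv s < abv a → abv (a + s) = abv a := by
    intro a s h
    refine le_antisymm (le_trans (hna a s) (max_le le_rfl (le_of_lt h))) ?_
    have h2 : abv a ≤ max (abv (a + s)) (abv s) := by
      have := hna (a + s) (-s)
      rw [add_neg_cancel_right, abv.map_neg] at this
      exact this
    rcases max_cases (abv (a + s)) (abv s) with ⟨he, _⟩ | ⟨he, _⟩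
    · rw [he] at h2; exact h2
    · rw [he] at h2; exact absurd (lt_of_le_of_lt h2 h) (lt_irrefl _)
  -- key numeric inequality
  have hstep : ∀ t m, q ^ (2 + t) * d m < q * d (m + t + 1) := by
    intro t
    induction t with
    | zero =>
      intro m
      have := hdsucc m
      calc q ^ 2 * d m = q * (q * d m) := by ring
        _ < q * (q * d m + 1) := by nlinarith [hq2]
        _ = q * d (m + 1) := by rw [hdsucc m]
    | succ t ih =>
      intro m
      have h1 : q ^ (2 + (t+1)) * d m = q * (q ^ (2 + t) * d m) := by ring
      have h2 : q * (q ^ (2+t) * d m) < q * (q * d (m + t + 1)) := by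
        have := ih m
        have hq0n : 0 < q := by omega
        exact (Nat.mul_lt_mul_left hq0n).mpr this
      have h3 : q * d (m + t + 1) ≤ d (m + t + 2) := by
        have h4 := hdsucc (m + t + 1)
        rw [show m + t + 1 + 1 = m + t + 2 from rfl] at h4
        omega
      calc q ^ (2 + (t+1)) * d m = q * (q ^ (2 + t) * d m) := h1
        _ < q * (q * d (m + t + 1)) := h2
        _ ≤ q * d (m + t + 2) := Nat.mul_le_mul_left q h3
        _ = q * d (m + (t+1) + 1) := rfl
  -- absolute value of the terms of S_n
  have hterm : ∀ n l : ℕ,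
      abv (σ l / algebraMap (LaurentSeries F) L ((Dfac q (xK F) (n - l)) ^ q ^ l))
        = abv (σ l) * (q:ℝ) ^ ((q ^ l * d (n - l) : ℕ) : ℤ) := by
    intro n l
    rw [map_div₀, map_pow, abv.map_pow, hD, ← zpow_natCast ((q:ℝ) ^ (-(d (n-l) : ℤ))) (q ^ l),
      ← zpow_mul, div_eq_mul_inv, ← zpow_neg]
    congr 1
    push_cast
    ring
  -- |S_n| for n ≥ 1
  have hS : ∀ n, 1 ≤ n → abv (Sseq (F := F) q σ n) = (q:ℝ) ^ ((q * d (n-1) : ℕ) : ℤ) := by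
    intro n hn
    have h1mem : 1 ∈ Finset.Icc 1 n := Finset.mem_Icc.2 ⟨le_rfl, hn⟩
    rw [Sseq, ← Finset.add_sum_erase _ _ h1mem]
    have hterm1 : abv (σ 1 / algebraMap (LaurentSeries F) L ((Dfac q (xK F) (n - 1)) ^ q ^ 1))
        = (q:ℝ) ^ ((q * d (n-1) : ℕ) : ℤ) := by
      rw [hterm n 1, hσ1, one_mul, pow_one]
    have hrest : abv (∑ l ∈ (Finset.Icc 1 n).erase 1,
        σ l / algebraMap (LaurentSeries F) L ((Dfac q (xK F) (n - l)) ^ q ^ l))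
        < (q:ℝ) ^ ((q * d (n-1) : ℕ) : ℤ) := by
      apply habv_sum_lt
      · positivity
      · intro l hl
        rw [Finset.mem_erase, Finset.mem_Icc] at hl
        obtain ⟨hl1, hl2, hl3⟩ := hl
        have hl2' : 2 ≤ l := by omega
        rw [hterm n l]
        calc abv (σ l) * (q:ℝ) ^ ((q ^ l * d (n - l) : ℕ) : ℤ)
            ≤ 1 * (q:ℝ) ^ ((q ^ l * d (n - l) : ℕ) : ℤ) := by
              apply mul_le_mul_of_nonneg_right (hσ l hl2') (by positivity)
          _ = (q:ℝ) ^ ((q ^ l * d (n - l) : ℕ) : ℤ) := one_mul _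
          _ < (q:ℝ) ^ ((q * d (n-1) : ℕ) : ℤ) := by
              apply zpow_lt_zpow_right₀ hq1
              have : q ^ l * d (n - l) < q * d (n - 1) := by
                have := hstep (l - 2) (n - l)
                have he1 : 2 + (l - 2) = l := by omega
                have he2 : n - l + (l - 2) + 1 = n - 1 := by omega
                rw [he1, he2] at this
                exact this
              exact_mod_cast this
    rw [habv_add_eq _ _ (by rw [hterm1]; exact hrest), hterm1]
  -- |D_n S_n| = q⁻¹
  have hDS : ∀ n, 1 ≤ n →
      abv (algebraMap (LaurentSeries F) L (Dfac q (xK F) n) * Sseq (F := F) q σ n)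
        = (q : ℝ)⁻¹ := by
    intro n hn
    rw [abv.map_mul, hD, hS n hn, ← zpow_add₀ hq0']
    rw [show (-(d n : ℤ) + ((q * d (n-1) : ℕ) : ℤ)) = (-1 : ℤ) by
      have h := hdsucc (n - 1)
      rw [show n - 1 + 1 = n by omega] at h
      push_cast [h]; ring]
    exact zpow_neg_one _
  refine ⟨hDS, ?_⟩
  -- |b_j|
  have hbj : ∀ j, abv (b j) = (q:ℝ) ^ ((d j : ℕ) : ℤ) := by
    intro j
    induction j with
    | zero => simp [hb0, hd]
    | succ j ih =>
      rw [hb j, map_div₀, abv.map_pow, ih, hDS (j+1) (by omega),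
        ← zpow_natCast ((q:ℝ) ^ ((d j : ℕ) : ℤ)) q, ← zpow_mul,
        ← zpow_neg_one (q:ℝ), ← zpow_sub₀ hq0']
      congr 1
      push_cast [hdsucc j]
      ring
  intro j
  rw [hbj j]
  have hcast : (((q : ℝ) ^ j - 1) / ((q : ℝ) - 1)) = ((d j : ℕ) : ℝ) := by
    rw [← geom_sum_eq (ne_of_gt hq1) j, hd]
    push_cast
    ring
  rw [hcast, show ((d j : ℕ) : ℝ) = (((d j : ℕ) : ℤ) : ℝ) by push_cast; ring,
    Real.rpow_intCast]
end
end

section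
/- Let e_δ(t) = Σ b_j t^{q^j} with b_0 = 1 be a formal F_q-linear power series, and let log_δ(t) = Σ β_n t^{q^n} be its composition inverse, determined by β_0 = 1 and β_l = -Σ_{m=1}^{l} b_m β_{l-m}^{q^m}. If |b_j| ≤ q^{(q^j-1)/(q-1)} for all j, then |β_j| ≤ q^{(q^j-1)/(q-1)} for all j ≥ 0. -/
noncomputable section

lemma nonarch_sum_le {L : Type*} [Field L] (abv : AbsoluteValue L ℝ)
    (hna : ∀ a b : L, abv (a + b) ≤ max (abv a) (abv b))
    {ι : Type*} (s : Finset ι) (f : ι → L) {C : ℝ} (hC : 0 ≤ C)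
    (h : ∀ i ∈ s, abv (f i) ≤ C) : abv (∑ i ∈ s, f i) ≤ C := by
  classical
  induction s using Finset.induction with
  | empty => simpa using hC
  | insert _ _ hx ih =>
    rw [Finset.sum_insert hx]
    refine le_trans (hna _ _) (max_le ?_ ?_)
    · exact h _ (Finset.mem_insert_self _ _)
    · exact ih fun i hi => h i (Finset.mem_insert_of_mem hi)

/-- If `log_δ(t) = Σ β_n t^{q^n}` is the composition inverse of the formal `F_q`-linear power
series `e_δ(t) = Σ b_j t^{q^j}` (`b_0 = 1`), so that `β_0 = 1` and
`β_l = -Σ_{m=1}^{l} b_m β_{l-m}^{q^m}`, and if `|b_j| ≤ q^{(q^j-1)/(q-1)}` for all `j`, then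
`|β_j| ≤ q^{(q^j-1)/(q-1)}` for all `j ≥ 0`.  Here the coefficients lie in a field `L`
(such as `K̄_c`) with a nonarchimedean absolute value `abv`, and `q` is the cardinality of the
underlying finite field. -/
theorem log_coefficients_bound {F L : Type*} [Field F] [Fintype F] [Field L]
    (q : ℕ) (hq : q = Fintype.card F)
    (abv : AbsoluteValue L ℝ)
    (hna : ∀ a b : L, abv (a + b) ≤ max (abv a) (abv b))
    (b β : ℕ → L) (hb0 : b 0 = 1)
    (hb : ∀ j : ℕ, abv (b j) ≤ (q : ℝ) ^ (((q : ℝ) ^ j - 1) / ((q : ℝ) - 1)))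
    (hβ0 : β 0 = 1)
    (hβ : ∀ l, 1 ≤ l → β l = -∑ m ∈ Finset.Icc 1 l, b m * (β (l - m)) ^ q ^ m) :
    ∀ j : ℕ, abv (β j) ≤ (q : ℝ) ^ (((q : ℝ) ^ j - 1) / ((q : ℝ) - 1)) := by
  have hq2 : 2 ≤ q := hq ▸ Fintype.one_lt_card
  have hqR : (1 : ℝ) < (q : ℝ) := by exact_mod_cast hq2
  have hq0 : (0 : ℝ) < (q : ℝ) := by linarith
  have hqne : ((q : ℝ) - 1) ≠ 0 := by linarith
  intro j
  induction j using Nat.strong_induction_on with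
  | _ l ih =>
    rcases Nat.eq_zero_or_pos l with rfl | hl
    · simp [hβ0]
    · rw [hβ l hl, abv.map_neg]
      apply nonarch_sum_le abv hna _ _ (Real.rpow_nonneg hq0.le _)
      intro m hm
      rw [Finset.mem_Icc] at hm
      have hml : m ≤ l := hm.2
      rw [abv.map_mul, abv.map_pow]
      have h1 := hb m
      have h2 := ih (l - m) (by omega)
      calc abv (b m) * abv (β (l - m)) ^ q ^ m
          ≤ (q : ℝ) ^ (((q : ℝ) ^ m - 1) / ((q : ℝ) - 1)) *
            ((q : ℝ) ^ (((q : ℝ) ^ (l - m) - 1) / ((q : ℝ) - 1))) ^ q ^ m := by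
            apply mul_le_mul h1 (pow_le_pow_left₀ (abv.nonneg _) h2 _)
              (pow_nonneg (abv.nonneg _) _) (Real.rpow_nonneg hq0.le _)
        _ = (q : ℝ) ^ (((q : ℝ) ^ l - 1) / ((q : ℝ) - 1)) := by
            rw [← Real.rpow_natCast ((q : ℝ) ^ (((q : ℝ) ^ (l - m) - 1) / ((q : ℝ) - 1))) (q ^ m),
              ← Real.rpow_mul hq0.le, ← Real.rpow_add hq0]
            congr 1
            push_cast
            have hql : (q : ℝ) ^ m * (q : ℝ) ^ (l - m) = (q : ℝ) ^ l := by
              rw [← pow_add]; congr 1; omega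
            field_simp
            nlinarith [hql]
end
end
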